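/- Let t, d, e, f ∈ ℝ with 5e + f > 0, let s₊ ≥ 0 minimise g over [0, ∞) and let s₋ ≤ 0 minimise g over (−∞, 0], and assume g(s₋) < g(s₊). Then there exists ε₀ > 0 such that for every 0 < ε < ε₀ there exists a Lipschitz function s : [0,1] → ℝ with s(1) = s₊ and I[s] < (1/3)g(s₊). Consequently, for ε < ε₀, no function that is nonnegative on [0,1] can minimise I over the class of Lipschitz functions σ : [0,1] → ℝ with σ(1) = s₊; in particular any global minimiser of I attains negative values. -/

import Mathlib

noncomputable section
open MeasureTheory

/-- The sixth-order bulk potential restricted to uniaxial Q-tensors: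
`g(s) = (t/3)s² − (2√6/9)s³ + (2/9)s⁴ + (4d/135)s⁵ + (4e/81)s⁶ + (2(f−e)/243)s⁶`. -/
def g (t d e f s : ℝ) : ℝ :=
  t / 3 * s ^ 2 - 2 * Real.sqrt 6 / 9 * s ^ 3 + 2 / 9 * s ^ 4
    + 4 * d / 135 * s ^ 5 + 4 * e / 81 * s ^ 6 + 2 * (f - e) / 243 * s ^ 6

lemma gContinuous (t d e f : ℝ) : Continuous (g t d e f) := by
  unfold g; fun_prop

/-- The radial hedgehog energy
`I[s] = ∫₀¹ [ε²((1/2)s'(r)² + (2/r²)s(r)²) + g(s(r))] r² dr`. -/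
def rhEnergy (ε t d e f : ℝ) (s : ℝ → ℝ) : ℝ :=
  ∫ r in (0:ℝ)..1,
    (ε ^ 2 * (1 / 2 * (deriv s r) ^ 2 + 2 / r ^ 2 * (s r) ^ 2) + g t d e f (s r)) * r ^ 2

/-- Generalised energy with an arbitrary bulk potential `G`. -/
def genEnergy (ε : ℝ) (G : ℝ → ℝ) (s : ℝ → ℝ) : ℝ :=
  ∫ r in (0:ℝ)..1,
    (ε ^ 2 * (1 / 2 * (deriv s r) ^ 2 + 2 / r ^ 2 * (s r) ^ 2) + G (s r)) * r ^ 2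

lemma rhEnergy_eq (ε t d e f : ℝ) (s : ℝ → ℝ) :
    rhEnergy ε t d e f s = genEnergy ε (g t d e f) s := rfl

/-- The competitor: equal to `sm` on `[0, 1-δ]`, linear on `[1-δ,1]`, equal to `sp` after. -/
def comp (sm sp δ : ℝ) (r : ℝ) : ℝ :=
  sm + (sp - sm) * max (min ((r - (1 - δ)) / δ) 1) 0

section CompLemmas

variable {sm sp δ : ℝ}

lemma comp_one (hδ0 : 0 < δ) : comp sm sp δ 1 = sp := by
  unfold comp
  rw [show (1:ℝ) - (1 - δ) = δ by ring, div_self hδ0.ne']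
  norm_num

lemma comp_mem (hsmsp : sm ≤ sp) (r : ℝ) : comp sm sp δ r ∈ Set.Icc sm sp := by
  unfold comp
  have h0 : (0:ℝ) ≤ max (min ((r - (1 - δ)) / δ) 1) 0 := le_max_right _ _
  have h1 : max (min ((r - (1 - δ)) / δ) 1) 0 ≤ 1 := max_le (min_le_right _ _) zero_le_one
  constructor <;> nlinarith

lemma comp_sq_le (hsmsp : sm ≤ sp) (r : ℝ) : (comp sm sp δ r) ^ 2 ≤ sm ^ 2 + sp ^ 2 := by
  obtain ⟨h1, h2⟩ := comp_mem (δ := δ) hsmsp r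
  rcases le_or_gt (comp sm sp δ r) 0 with h | h
  · nlinarith
  · nlinarith

lemma comp_lipschitz (hδ0 : 0 < δ) (hsmsp : sm ≤ sp) :
    LipschitzWith (Real.toNNReal ((sp - sm) / δ)) (comp sm sp δ) := by
  have hC0 : (0:ℝ) ≤ (sp - sm) / δ := div_nonneg (by linarith) hδ0.le
  apply LipschitzWith.of_dist_le_mul
  intro x y
  rw [Real.dist_eq, Real.dist_eq, Real.coe_toNNReal _ hC0]
  have h1 : comp sm sp δ x - comp sm sp δ y
      = (sp - sm) * (max (min ((x - (1 - δ)) / δ) 1) 0 - max (min ((y - (1 - δ)) / δ) 1) 0) := by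
    unfold comp; ring
  have h2 : |max (min ((x - (1 - δ)) / δ) 1) 0 - max (min ((y - (1 - δ)) / δ) 1) 0|
      ≤ |x - y| / δ := by
    calc |max (min ((x - (1 - δ)) / δ) 1) 0 - max (min ((y - (1 - δ)) / δ) 1) 0|
        ≤ |min ((x - (1 - δ)) / δ) 1 - min ((y - (1 - δ)) / δ) 1| := abs_max_sub_max_le_abs _ _ _
      _ ≤ max |(x - (1 - δ)) / δ - (y - (1 - δ)) / δ| |(1:ℝ) - 1| := abs_min_sub_min_le_max _ _ _ _
      _ = |(x - y) / δ| := by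
          rw [show (x - (1 - δ)) / δ - (y - (1 - δ)) / δ = (x - y) / δ by ring]
          simp
      _ = |x - y| / δ := by rw [abs_div, abs_of_pos hδ0]
  rw [h1, abs_mul, abs_of_nonneg (by linarith : (0:ℝ) ≤ sp - sm)]
  calc (sp - sm) * |max (min ((x - (1 - δ)) / δ) 1) 0 - max (min ((y - (1 - δ)) / δ) 1) 0|
      ≤ (sp - sm) * (|x - y| / δ) := mul_le_mul_of_nonneg_left h2 (by linarith)
    _ = (sp - sm) / δ * |x - y| := by ring

lemma comp_left (hδ0 : 0 < δ) {r : ℝ} (hr : r ≤ 1 - δ) : comp sm sp δ r = sm := by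
  unfold comp
  have h1 : (r - (1 - δ)) / δ ≤ 0 := div_nonpos_of_nonpos_of_nonneg (by linarith) hδ0.le
  have h2 : min ((r - (1 - δ)) / δ) 1 ≤ 0 := le_trans (min_le_left _ _) h1
  rw [max_eq_right h2]
  ring

lemma comp_deriv_left (hδ0 : 0 < δ) {r : ℝ} (hr : r < 1 - δ) : deriv (comp sm sp δ) r = 0 := by
  have hev : comp sm sp δ =ᶠ[nhds r] fun _ => sm := by
    filter_upwards [Iio_mem_nhds hr] with x hx
    exact comp_left hδ0 (le_of_lt hx)
  rw [hev.deriv_eq]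
  exact deriv_const r sm

lemma comp_deriv_bound (hδ0 : 0 < δ) (hsmsp : sm ≤ sp) (r : ℝ) :
    |deriv (comp sm sp δ) r| ≤ (sp - sm) / δ := by
  have hC0 : (0:ℝ) ≤ (sp - sm) / δ := div_nonneg (by linarith) hδ0.le
  have := norm_deriv_le_of_lipschitz (x₀ := r) (comp_lipschitz hδ0 hsmsp)
  simpa [Real.norm_eq_abs, Real.coe_toNNReal _ hC0] using this

end CompLemmas

section EnergyLemmas

/-- The generic integrand. -/
def genF (ε : ℝ) (G : ℝ → ℝ) (s : ℝ → ℝ) (r : ℝ) : ℝ :=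
  (ε ^ 2 * (1 / 2 * (deriv s r) ^ 2 + 2 / r ^ 2 * (s r) ^ 2) + G (s r)) * r ^ 2

lemma genEnergy_eq_integral (ε : ℝ) (G : ℝ → ℝ) (s : ℝ → ℝ) :
    genEnergy ε G s = ∫ r in (0:ℝ)..1, genF ε G s r := rfl

lemma genF_measurable (ε : ℝ) {G : ℝ → ℝ} (hG : Continuous G) {s : ℝ → ℝ}
    (hs : Continuous s) : Measurable (genF ε G s) := by
  have h1 : Measurable (deriv s) := measurable_deriv s
  have h2 : Measurable s := hs.measurable
  exact (((((h1.pow_const 2).const_mul _).add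
    (((measurable_const.div (measurable_id.pow_const 2))).mul (h2.pow_const 2))).const_mul
      _).add (hG.measurable.comp h2)).mul (measurable_id.pow_const 2)

/-- Pointwise upper bound on the integrand for `0 < r ≤ 1`, given bounds on
the derivative, the value, and the potential. -/
lemma genF_le {ε : ℝ} {G : ℝ → ℝ} {s : ℝ → ℝ} {r C S2 M : ℝ}
    (hr0 : 0 < r) (hr1 : r ≤ 1)
    (hd : |deriv s r| ≤ C) (hs2 : (s r) ^ 2 ≤ S2) (hg : |G (s r)| ≤ M) :
    genF ε G s r ≤ ε ^ 2 * (C ^ 2 / 2 + 2 * S2) + M := by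
  have hrne : r ≠ 0 := hr0.ne'
  have hexp : genF ε G s r = ε ^ 2 * (1 / 2 * (deriv s r) ^ 2 * r ^ 2) + 2 * ε ^ 2 * (s r) ^ 2
      + G (s r) * r ^ 2 := by
    unfold genF
    field_simp
  have hr2 : r ^ 2 ≤ 1 := by nlinarith
  have hd2 : (deriv s r) ^ 2 ≤ C ^ 2 := by
    nlinarith [abs_nonneg (deriv s r), sq_abs (deriv s r)]
  have e1 : 1 / 2 * (deriv s r) ^ 2 * r ^ 2 ≤ C ^ 2 / 2 := by
    nlinarith [sq_nonneg (deriv s r), sq_nonneg r]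
  have e1' : ε ^ 2 * (1 / 2 * (deriv s r) ^ 2 * r ^ 2) ≤ ε ^ 2 * (C ^ 2 / 2) :=
    mul_le_mul_of_nonneg_left e1 (sq_nonneg ε)
  have e2 : 2 * ε ^ 2 * (s r) ^ 2 ≤ ε ^ 2 * (2 * S2) := by
    nlinarith [sq_nonneg ε]
  have e3 : G (s r) * r ^ 2 ≤ M := by
    have h3 : G (s r) ≤ M := le_trans (le_abs_self _) hg
    nlinarith [sq_nonneg r, neg_abs_le (G (s r)), abs_nonneg (G (s r))]
  calc genF ε G s r = ε ^ 2 * (1 / 2 * (deriv s r) ^ 2 * r ^ 2) + 2 * ε ^ 2 * (s r) ^ 2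
      + G (s r) * r ^ 2 := hexp
    _ ≤ ε ^ 2 * (C ^ 2 / 2) + ε ^ 2 * (2 * S2) + M := by linarith
    _ = ε ^ 2 * (C ^ 2 / 2 + 2 * S2) + M := by ring

/-- Pointwise two-sided bound on the integrand on `[0,1]`. -/
lemma genF_abs_le {ε : ℝ} {G : ℝ → ℝ} {s : ℝ → ℝ} {r C S2 M : ℝ}
    (hr0 : 0 ≤ r) (hr1 : r ≤ 1) (hM : 0 ≤ M)
    (hd : |deriv s r| ≤ C) (hs2 : (s r) ^ 2 ≤ S2) (hg : |G (s r)| ≤ M) :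
    |genF ε G s r| ≤ ε ^ 2 * (C ^ 2 / 2 + 2 * S2) + 2 * M := by
  have hC2 : (0:ℝ) ≤ C := le_trans (abs_nonneg _) hd
  have hS2 : (0:ℝ) ≤ S2 := le_trans (sq_nonneg _) hs2
  rcases eq_or_lt_of_le hr0 with h | h
  · have : genF ε G s r = 0 := by unfold genF; rw [← h]; ring
    rw [this, abs_zero]; positivity
  · have hub := genF_le (ε := ε) h hr1 hd hs2 hg
    have hlb : -(ε ^ 2 * (C ^ 2 / 2 + 2 * S2) + 2 * M) ≤ genF ε G s r := by
      have hrne : r ≠ 0 := h.ne'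
      have hexp : genF ε G s r = ε ^ 2 * (1 / 2 * (deriv s r) ^ 2 * r ^ 2)
          + 2 * ε ^ 2 * (s r) ^ 2 + G (s r) * r ^ 2 := by
        unfold genF; field_simp
      have hr2 : r ^ 2 ≤ 1 := by nlinarith
      have h3 : -M ≤ G (s r) := by
        have := neg_abs_le (G (s r)); linarith
      have h4 : -M ≤ G (s r) * r ^ 2 := by
        nlinarith [sq_nonneg r, neg_abs_le (G (s r)), abs_nonneg (G (s r))]
      have h5 : (0:ℝ) ≤ ε ^ 2 * (1 / 2 * (deriv s r) ^ 2 * r ^ 2) := by positivity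
      have h6 : (0:ℝ) ≤ 2 * ε ^ 2 * (s r) ^ 2 := by positivity
      have h7 : (0:ℝ) ≤ ε ^ 2 * (C ^ 2 / 2 + 2 * S2) := by positivity
      rw [hexp]; linarith
    rw [abs_le]; exact ⟨hlb, hub.trans (by linarith)⟩

/-- Lower bound on the energy of a nonnegative configuration. -/
lemma genEnergy_lower {ε : ℝ} {G : ℝ → ℝ} (sp : ℝ) (hspG : G sp ≤ 0) (σ : ℝ → ℝ)
    (hσ : ∀ r ∈ Set.Icc (0:ℝ) 1, G sp ≤ G (σ r)) :
    1 / 3 * G sp ≤ genEnergy ε G σ := by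
  rw [genEnergy_eq_integral]
  by_cases hσint : IntervalIntegrable (genF ε G σ) volume 0 1
  · have hpt : ∀ r ∈ Set.Icc (0:ℝ) 1, G sp * r ^ 2 ≤ genF ε G σ r := by
      intro r hr
      have h1 : G sp ≤ G (σ r) := hσ r hr
      have h2 : (0:ℝ) ≤ ε ^ 2 * (1 / 2 * (deriv σ r) ^ 2 + 2 / r ^ 2 * (σ r) ^ 2) := by positivity
      have h3 : G sp ≤ ε ^ 2 * (1 / 2 * (deriv σ r) ^ 2 + 2 / r ^ 2 * (σ r) ^ 2) + G (σ r) := by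
        linarith
      exact mul_le_mul_of_nonneg_right h3 (sq_nonneg r)
    have hmono := intervalIntegral.integral_mono_on (by norm_num : (0:ℝ) ≤ 1)
      ((continuous_const.mul (continuous_pow 2)).intervalIntegrable 0 1) hσint hpt
    have hval : ∫ r in (0:ℝ)..1, G sp * r ^ 2 = 1 / 3 * G sp := by
      rw [intervalIntegral.integral_const_mul, integral_pow]
      norm_num
      ring
    simp only [Pi.mul_apply] at hmono
    rw [hval] at hmono
    exact hmono
  · rw [intervalIntegral.integral_undef hσint]
    linarith

end EnergyLemmas

section EnergyUpper

/-- Upper bound on the energy of the competitor. -/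
lemma genEnergy_comp_le {G : ℝ → ℝ} (hG : Continuous G) {sm sp δ M ε : ℝ}
    (hsm : sm ≤ 0) (hsp : 0 ≤ sp) (hδ0 : 0 < δ) (hδ1 : δ ≤ 1 / 2)
    (hM : ∀ u ∈ Set.Icc sm sp, |G u| ≤ M) (hMnn : 0 ≤ M) :
    genEnergy ε G (comp sm sp δ)
      ≤ 2 * ε ^ 2 * sm ^ 2 * (1 - δ) + G sm * ((1 - δ) ^ 3 / 3)
        + (ε ^ 2 * (((sp - sm) / δ) ^ 2 / 2 + 2 * (sm ^ 2 + sp ^ 2)) + M) * δ := by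
  have hsmsp : sm ≤ sp := le_trans hsm hsp
  set s : ℝ → ℝ := comp sm sp δ with hsdef
  set C : ℝ := (sp - sm) / δ with hCdef
  set S2 : ℝ := sm ^ 2 + sp ^ 2 with hS2def
  have hscont : Continuous s := (comp_lipschitz hδ0 hsmsp).continuous
  have hFmeas : Measurable (genF ε G s) := genF_measurable ε hG hscont
  have hdC : ∀ r, |deriv s r| ≤ C := comp_deriv_bound hδ0 hsmsp
  have hs2 : ∀ r, (s r) ^ 2 ≤ S2 := comp_sq_le hsmsp
  have hgB : ∀ r, |G (s r)| ≤ M := fun r => hM _ (comp_mem hsmsp r)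
  have hδle1 : 1 - δ ≤ 1 := by linarith
  have hδge0 : (0:ℝ) ≤ 1 - δ := by linarith
  -- integrability
  have hbdd : ∀ᵐ r ∂(volume.restrict (Set.Icc (0:ℝ) 1)),
      ‖genF ε G s r‖ ≤ ε ^ 2 * (C ^ 2 / 2 + 2 * S2) + 2 * M := by
    rw [ae_restrict_iff' measurableSet_Icc]
    filter_upwards with r hr
    simpa [Real.norm_eq_abs] using
      genF_abs_le hr.1 hr.2 hMnn (hdC r) (hs2 r) (hgB r)
  have hFintOn : IntegrableOn (genF ε G s) (Set.Icc (0:ℝ) 1) volume :=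
    Measure.integrableOn_of_bounded (by rw [Real.volume_Icc]; exact ENNReal.ofReal_ne_top)
      hFmeas.aestronglyMeasurable hbdd
  have hFint1 : IntervalIntegrable (genF ε G s) volume 0 (1 - δ) := by
    apply (hFintOn.mono_set ?_).intervalIntegrable
    rw [Set.uIcc_of_le hδge0]
    exact Set.Icc_subset_Icc le_rfl hδle1
  have hFint2 : IntervalIntegrable (genF ε G s) volume (1 - δ) 1 := by
    apply (hFintOn.mono_set ?_).intervalIntegrable
    rw [Set.uIcc_of_le hδle1]
    exact Set.Icc_subset_Icc hδge0 le_rfl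
  -- first piece
  have hI1 : ∫ r in (0:ℝ)..(1 - δ), genF ε G s r
      = 2 * ε ^ 2 * sm ^ 2 * (1 - δ) + G sm * ((1 - δ) ^ 3 / 3) := by
    have hcong : ∫ r in (0:ℝ)..(1 - δ), genF ε G s r
        = ∫ r in (0:ℝ)..(1 - δ), (2 * ε ^ 2 * sm ^ 2 + G sm * r ^ 2) := by
      apply intervalIntegral.integral_congr_ae
      have hne : ∀ᵐ r : ℝ ∂volume, r ≠ 1 - δ := by
        rw [MeasureTheory.ae_iff]
        have h0 : {a : ℝ | ¬a ≠ 1 - δ} = {1 - δ} := by ext x; simp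
        rw [h0]
        exact measure_singleton _
      filter_upwards [hne] with r hrne hr
      rw [Set.uIoc_of_le hδge0] at hr
      have hr0 : 0 < r := hr.1
      have hrlt : r < 1 - δ := lt_of_le_of_ne hr.2 hrne
      have h1 : s r = sm := comp_left hδ0 hrlt.le
      have h2 : deriv s r = 0 := comp_deriv_left hδ0 hrlt
      unfold genF
      rw [h1, h2]
      field_simp
      ring
    rw [hcong, intervalIntegral.integral_add (g := fun r : ℝ => G sm * r ^ 2) intervalIntegrable_const
      ((continuous_const.mul (continuous_pow 2)).intervalIntegrable _ _)]
    rw [intervalIntegral.integral_const, intervalIntegral.integral_const_mul, integral_pow]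
    norm_num
    ring
  -- second piece
  have hI2 : ∫ r in (1 - δ)..1, genF ε G s r ≤ (ε ^ 2 * (C ^ 2 / 2 + 2 * S2) + M) * δ := by
    have hmono : ∫ r in (1 - δ)..1, genF ε G s r
        ≤ ∫ _ in (1 - δ)..1, (ε ^ 2 * (C ^ 2 / 2 + 2 * S2) + M) :=
      intervalIntegral.integral_mono_on hδle1 hFint2 intervalIntegrable_const
        (fun x hx => genF_le (by linarith [hx.1]) hx.2 (hdC x) (hs2 x) (hgB x))
    have hconst : ∫ _ in (1 - δ)..1, (ε ^ 2 * (C ^ 2 / 2 + 2 * S2) + M)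
        = (ε ^ 2 * (C ^ 2 / 2 + 2 * S2) + M) * δ := by
      rw [intervalIntegral.integral_const, smul_eq_mul]; ring
    linarith
  calc genEnergy ε G s
      = (∫ r in (0:ℝ)..(1 - δ), genF ε G s r) + ∫ r in (1 - δ)..1, genF ε G s r := by
        rw [genEnergy_eq_integral, ← intervalIntegral.integral_add_adjacent_intervals hFint1 hFint2]
    _ ≤ 2 * ε ^ 2 * sm ^ 2 * (1 - δ) + G sm * ((1 - δ) ^ 3 / 3)
        + (ε ^ 2 * (C ^ 2 / 2 + 2 * S2) + M) * δ := by rw [hI1]; linarith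

end EnergyUpper

/-- The final arithmetic estimate. -/
lemma arith_bound {gsm gsp M δ ε C S2 sm : ℝ}
    (hδ0 : 0 < δ) (hδ1 : δ ≤ 1 / 2) (hgsm : gsm ≤ 0) (hMnn : 0 ≤ M) (hε : 0 < ε)
    (hCS : 0 ≤ C ^ 2 / 2 + 2 * S2)
    (hδΔ : (|gsm| + M + 1) * δ ≤ (gsp - gsm) / 6)
    (hεA : ε ^ 2 * (2 * sm ^ 2 + C ^ 2 / 2 + 2 * S2 + 1) < (gsp - gsm) / 6) :
    2 * ε ^ 2 * sm ^ 2 * (1 - δ) + gsm * ((1 - δ) ^ 3 / 3)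
      + (ε ^ 2 * (C ^ 2 / 2 + 2 * S2) + M) * δ < 1 / 3 * gsp := by
  have habs : -|gsm| ≤ gsm := neg_abs_le _
  have habs' : 0 ≤ |gsm| := abs_nonneg _
  have hΔ : 0 < gsp - gsm := by nlinarith
  have hstep1 : gsm * ((1 - δ) ^ 3 / 3) ≤ gsm / 3 + |gsm| * δ := by
    have hpos : 0 ≤ 3 * δ - 3 * δ ^ 2 + δ ^ 3 := by nlinarith
    have hng : -gsm ≤ |gsm| := by linarith [neg_abs_le gsm, le_abs_self gsm]
    have h1 : -gsm * (3 * δ - 3 * δ ^ 2 + δ ^ 3) ≤ |gsm| * (3 * δ - 3 * δ ^ 2 + δ ^ 3) :=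
      mul_le_mul_of_nonneg_right hng hpos
    have h2 : |gsm| * (3 * δ - 3 * δ ^ 2 + δ ^ 3) ≤ |gsm| * (3 * δ) :=
      mul_le_mul_of_nonneg_left (by nlinarith) habs'
    nlinarith [h1, h2]
  have hstep2 : 2 * ε ^ 2 * sm ^ 2 * (1 - δ) ≤ ε ^ 2 * (2 * sm ^ 2) := by
    nlinarith [mul_nonneg (mul_nonneg (by positivity : (0:ℝ) ≤ 2 * ε ^ 2) (sq_nonneg sm)) hδ0.le]
  have hstep3 : (ε ^ 2 * (C ^ 2 / 2 + 2 * S2) + M) * δ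
      ≤ ε ^ 2 * (C ^ 2 / 2 + 2 * S2) + M * δ := by
    have h1 : (0:ℝ) ≤ ε ^ 2 * (C ^ 2 / 2 + 2 * S2) := by positivity
    nlinarith
  have hstep4 : ε ^ 2 * (2 * sm ^ 2) + ε ^ 2 * (C ^ 2 / 2 + 2 * S2)
      < (gsp - gsm) / 6 - ε ^ 2 := by nlinarith
  have hstep5 : |gsm| * δ + M * δ ≤ (gsp - gsm) / 6 - δ := by nlinarith
  have hε2 : 0 < ε ^ 2 := by positivity
  linarith

set_option maxHeartbeats 1000000 in
/-- Deep in the nematic phase (`g(s₋) < g(s₊)`), for sufficiently small `ε`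
there is a Lipschitz competitor with energy below `(1/3)g(s₊)`; consequently
every Lipschitz global minimiser of `I` attains negative values. -/
theorem global_minimiser_negative_low_temperature
    (t d e f sp sm : ℝ) (h5ef : 0 < 5 * e + f)
    (hsp : 0 ≤ sp) (hminp : ∀ u : ℝ, 0 ≤ u → g t d e f sp ≤ g t d e f u)
    (hsm : sm ≤ 0) (hminm : ∀ u : ℝ, u ≤ 0 → g t d e f sm ≤ g t d e f u)
    (hlt : g t d e f sm < g t d e f sp) :
    ∃ ε₀ : ℝ, 0 < ε₀ ∧ ∀ ε : ℝ, 0 < ε → ε < ε₀ →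
      (∃ s : ℝ → ℝ, (∃ K : NNReal, LipschitzWith K s) ∧ s 1 = sp ∧
        rhEnergy ε t d e f s < 1 / 3 * g t d e f sp) ∧
      (∀ σ : ℝ → ℝ, (∃ K : NNReal, LipschitzWith K σ) → σ 1 = sp →
        (∀ τ : ℝ → ℝ, (∃ K : NNReal, LipschitzWith K τ) → τ 1 = sp →
          rhEnergy ε t d e f σ ≤ rhEnergy ε t d e f τ) →
        ∃ r ∈ Set.Icc (0:ℝ) 1, σ r < 0) := by
  obtain ⟨G, hGdef⟩ : ∃ G : ℝ → ℝ, G = g t d e f := ⟨_, rfl⟩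
  have hGcont : Continuous G := hGdef ▸ gContinuous t d e f
  have hrhEq : ∀ ε σ, rhEnergy ε t d e f σ = genEnergy ε G σ := by
    intro ε σ; rw [hGdef, rhEnergy_eq]
  have hminp' : ∀ u : ℝ, 0 ≤ u → G sp ≤ G u := by intro u hu; rw [hGdef]; exact hminp u hu
  have hminm' : ∀ u : ℝ, u ≤ 0 → G sm ≤ G u := by intro u hu; rw [hGdef]; exact hminm u hu
  have hlt' : G sm < G sp := by rw [hGdef]; exact hlt
  have hg0 : G 0 = 0 := by rw [hGdef]; simp [g]
  rw [← hGdef]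
  clear hminp hminm hlt hGdef
  have hsple : G sp ≤ 0 := by simpa [hg0] using hminp' 0 le_rfl
  have hsmle : G sm ≤ 0 := by simpa [hg0] using hminm' 0 le_rfl
  have hsmsp : sm ≤ sp := le_trans hsm hsp
  have hΔ : 0 < G sp - G sm := sub_pos.mpr hlt'
  obtain ⟨M0, hM0⟩ := (isCompact_Icc (a := sm) (b := sp)).exists_bound_of_continuousOn
    hGcont.continuousOn
  have hM : ∀ u ∈ Set.Icc sm sp, |G u| ≤ max M0 0 := fun u hu =>
    le_trans (by simpa [Real.norm_eq_abs] using hM0 u hu) (le_max_left _ _)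
  set M : ℝ := max M0 0 with hMdef
  have hMnn : 0 ≤ M := le_max_right _ _
  have hden : (0:ℝ) < |G sm| + M + 1 := by positivity
  set δ : ℝ := min (1 / 2) ((G sp - G sm) / (6 * (|G sm| + M + 1))) with hδdef
  have hδ0 : 0 < δ := lt_min (by norm_num) (by positivity)
  have hδhalf : δ ≤ 1 / 2 := min_le_left _ _
  have hδΔ : (|G sm| + M + 1) * δ ≤ (G sp - G sm) / 6 := by
    have h1 : δ ≤ (G sp - G sm) / (6 * (|G sm| + M + 1)) := min_le_right _ _
    have h2 : (|G sm| + M + 1) * ((G sp - G sm) / (6 * (|G sm| + M + 1)))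
        = (G sp - G sm) / 6 := by
      field_simp
    calc (|G sm| + M + 1) * δ
        ≤ (|G sm| + M + 1) * ((G sp - G sm) / (6 * (|G sm| + M + 1))) :=
          mul_le_mul_of_nonneg_left h1 hden.le
      _ = (G sp - G sm) / 6 := h2
  set C : ℝ := (sp - sm) / δ with hCdef
  have hC0 : 0 ≤ C := div_nonneg (by linarith) hδ0.le
  set S2 : ℝ := sm ^ 2 + sp ^ 2 with hS2def
  set A : ℝ := 2 * sm ^ 2 + C ^ 2 / 2 + 2 * S2 + 1 with hAdef
  have hA : 0 < A := by positivity
  refine ⟨Real.sqrt ((G sp - G sm) / (6 * A)), Real.sqrt_pos.mpr (by positivity),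
    fun ε hε hεlt => ?_⟩
  have hε2A : ε ^ 2 * A < (G sp - G sm) / 6 := by
    have hsq : Real.sqrt ((G sp - G sm) / (6 * A)) ^ 2 = (G sp - G sm) / (6 * A) :=
      Real.sq_sqrt (by positivity)
    have h1 : ε ^ 2 < (G sp - G sm) / (6 * A) := by
      nlinarith [Real.sqrt_nonneg ((G sp - G sm) / (6 * A))]
    have h2 : (G sp - G sm) / (6 * A) * A = (G sp - G sm) / 6 := by field_simp
    nlinarith
  have henergy : genEnergy ε G (comp sm sp δ) < 1 / 3 * G sp := by
    have hub := genEnergy_comp_le (ε := ε) hGcont hsm hsp hδ0 hδhalf hM hMnn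
    have hCS : (0:ℝ) ≤ C ^ 2 / 2 + 2 * S2 := by positivity
    have hεA' : ε ^ 2 * (2 * sm ^ 2 + C ^ 2 / 2 + 2 * S2 + 1) < (G sp - G sm) / 6 := by
      rw [hAdef] at hε2A; linarith
    have harith := arith_bound (gsm := G sm) (gsp := G sp) (M := M) (δ := δ) (ε := ε)
      (C := C) (S2 := S2) (sm := sm) hδ0 hδhalf hsmle hMnn hε hCS hδΔ hεA'
    rw [← hCdef, ← hS2def] at hub
    linarith
  have hs1 : comp sm sp δ 1 = sp := comp_one hδ0
  have hslip : LipschitzWith (Real.toNNReal C) (comp sm sp δ) := comp_lipschitz hδ0 hsmsp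
  constructor
  · exact ⟨comp sm sp δ, ⟨Real.toNNReal C, hslip⟩, hs1, by rw [hrhEq]; exact henergy⟩
  · intro σ hσlip hσ1 hσmin
    by_contra hcon
    push_neg at hcon
    have hlow : 1 / 3 * G sp ≤ genEnergy ε G σ :=
      genEnergy_lower sp hsple σ (fun r hr => hminp' _ (hcon r hr))
    have hcomp := hσmin (comp sm sp δ) ⟨Real.toNNReal C, hslip⟩ hs1
    rw [hrhEq ε σ, hrhEq ε (comp sm sp δ)] at hcomp
    linarith
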